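/- Let N and s be positive natural numbers, and work in ℝ^N with the standard inner product ⟨·,·⟩. Let D : ℝ^N → ℝ^N be a symmetric linear map (⟨D v, w⟩ = ⟨v, D w⟩ for all v, w). Let τ ∈ ℝ, a : Fin s → Fin s → ℝ, b : Fin s → ℝ. Suppose uⁿ, uⁿ⁺¹ ∈ ℝ^N and stage values uᵢ, kᵢ ∈ ℝ^N (i = 1,…,s) satisfy uᵢ = uⁿ + τ Σⱼ aᵢⱼ kⱼ and uⁿ⁺¹ = uⁿ + τ Σᵢ bᵢ kᵢ. Then ½⟨D uⁿ⁺¹, uⁿ⁺¹⟩ − ½⟨D uⁿ, uⁿ⟩ = τ Σᵢ bᵢ ⟨uᵢ, D kᵢ⟩ + (τ²/2) Σᵢ Σⱼ (bᵢbⱼ − bᵢaᵢⱼ − bⱼaⱼᵢ) ⟨kᵢ, D kⱼ⟩. -/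
import Mathlib


open scoped RealInnerProductSpace BigOperators

/-- the key algebraic identity in the proof of Theorem 2.1 for
Runge–Kutta updates with a symmetric operator `D`. -/
theorem rk_quadratic_momentum_identity
    (N s : ℕ) (hN : 0 < N) (hs : 0 < s)
    (D : EuclideanSpace ℝ (Fin N) →ₗ[ℝ] EuclideanSpace ℝ (Fin N))
    (hD : ∀ v w : EuclideanSpace ℝ (Fin N), ⟪D v, w⟫ = ⟪v, D w⟫)
    (τ : ℝ) (a : Fin s → Fin s → ℝ) (b : Fin s → ℝ)
    (un un1 : EuclideanSpace ℝ (Fin N)) (uS kS : Fin s → EuclideanSpace ℝ (Fin N))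
    (hstage : ∀ i, uS i = un + τ • ∑ j, a i j • kS j)
    (hnext : un1 = un + τ • ∑ i, b i • kS i) :
    (1/2 : ℝ) * ⟪D un1, un1⟫ - (1/2 : ℝ) * ⟪D un, un⟫
      = τ * ∑ i, b i * ⟪uS i, D (kS i)⟫
        + (τ^2 / 2) * ∑ i, ∑ j,
            (b i * b j - b i * a i j - b j * a j i) * ⟪kS i, D (kS j)⟫ := by
  have hsym : ∀ v w : EuclideanSpace ℝ (Fin N), ⟪v, D w⟫ = ⟪w, D v⟫ := fun v w => by
    rw [← hD v w, real_inner_comm]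
  set K : EuclideanSpace ℝ (Fin N) := ∑ i, b i • kS i with hK
  have hL : (1/2 : ℝ) * ⟪D un1, un1⟫ - (1/2 : ℝ) * ⟪D un, un⟫
      = τ * ⟪un, D K⟫ + (τ^2/2) * ⟪K, D K⟫ := by
    rw [hnext]
    simp only [map_add, map_smul, inner_add_left, inner_add_right, inner_smul_left,
      inner_smul_right, conj_trivial]
    rw [hD K un, hsym K un, hD K K, hD un K]
    ring
  have hKD : ⟪K, D K⟫ = ∑ i, ∑ j, b i * b j * ⟪kS i, D (kS j)⟫ := by
    rw [hK]
    rw [sum_inner]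
    refine Finset.sum_congr rfl fun i _ => ?_
    rw [inner_smul_left, map_sum, inner_sum, Finset.mul_sum]
    refine Finset.sum_congr rfl fun j _ => ?_
    rw [map_smul, inner_smul_right]
    simp [mul_assoc]
  have hunK : ⟪un, D K⟫ = ∑ i, b i * ⟪un, D (kS i)⟫ := by
    rw [hK, map_sum, inner_sum]
    refine Finset.sum_congr rfl fun i _ => ?_
    rw [map_smul, inner_smul_right]
  have hstage' : ∀ i, ⟪uS i, D (kS i)⟫
      = ⟪un, D (kS i)⟫ + τ * ∑ j, a i j * ⟪kS j, D (kS i)⟫ := by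
    intro i
    rw [hstage i, inner_add_left, inner_smul_left, sum_inner]
    simp only [inner_smul_left, conj_trivial]
  rw [hL, hKD, hunK]
  simp only [hstage']
  rw [show (∑ i, b i * (⟪un, D (kS i)⟫ + τ * ∑ j, a i j * ⟪kS j, D (kS i)⟫))
      = (∑ i, b i * ⟪un, D (kS i)⟫) + τ * ∑ i, ∑ j, b i * a i j * ⟪kS j, D (kS i)⟫ by
    rw [Finset.mul_sum, ← Finset.sum_add_distrib]
    refine Finset.sum_congr rfl fun i _ => ?_
    simp only [mul_assoc]
    rw [← Finset.mul_sum]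
    ring]
  -- remaining: pure double-sum algebra
  have key : ∑ i, ∑ j, (b i * b j - b i * a i j - b j * a j i) * ⟪kS i, D (kS j)⟫
      = (∑ i, ∑ j, b i * b j * ⟪kS i, D (kS j)⟫)
        - 2 * ∑ i, ∑ j, b i * a i j * ⟪kS j, D (kS i)⟫ := by
    have h1 : ∑ i, ∑ j, b j * a j i * ⟪kS i, D (kS j)⟫
        = ∑ i, ∑ j, b i * a i j * ⟪kS j, D (kS i)⟫ := by
      rw [Finset.sum_comm]
    have h2 : ∑ i, ∑ j, b i * a i j * ⟪kS i, D (kS j)⟫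
        = ∑ i, ∑ j, b i * a i j * ⟪kS j, D (kS i)⟫ := by
      refine Finset.sum_congr rfl fun i _ => Finset.sum_congr rfl fun j _ => ?_
      rw [hsym]
    calc ∑ i, ∑ j, (b i * b j - b i * a i j - b j * a j i) * ⟪kS i, D (kS j)⟫
        = (∑ i, ∑ j, b i * b j * ⟪kS i, D (kS j)⟫)
          - (∑ i, ∑ j, b i * a i j * ⟪kS i, D (kS j)⟫)
          - (∑ i, ∑ j, b j * a j i * ⟪kS i, D (kS j)⟫) := by
          simp only [← Finset.sum_sub_distrib]
          refine Finset.sum_congr rfl fun i _ => Finset.sum_congr rfl fun j _ => ?_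
          ring
      _ = _ := by rw [h1, h2]; ring
  rw [key]
  ring
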